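/- For value-conscious customers, a revenue-ordered set is optimal for the cardinality-constrained BundleMVL-2 problem: for any d > 0, there exists an index m ≤ d such that A_m = {1,…,m} attains max_{|C| ≤ d} R₂(C). Concretely, if C* is optimal with |C*| ≤ d and there exist m < l with m ∉ C*, l ∈ C*, then the swapped set C̃ = (C* \ {l}) ∪ {m} satisfies R₂(C̃) = R₂(C*). -/

import Mathlib

open Finset

lemma sum_pairs_insert (f : ℕ → ℕ → ℝ) (hf : ∀ a b, f a b = f b a)
    (E : Finset ℕ) (x : ℕ) (hx : x ∉ E) :
    (∑ i ∈ insert x E, ∑ j ∈ (insert x E).filter (fun j => i < j), f i j) =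
    (∑ i ∈ E, ∑ j ∈ E.filter (fun j => i < j), f i j) + ∑ k ∈ E, f x k := by
  rw [Finset.sum_insert hx]
  have h1 : (insert x E).filter (fun j => x < j) = E.filter (fun j => x < j) := by
    rw [Finset.filter_insert]; simp
  have h2 : ∀ i ∈ E, ∑ j ∈ (insert x E).filter (fun j => i < j), f i j
      = (∑ j ∈ E.filter (fun j => i < j), f i j) + (if i < x then f i x else 0) := by
    intro i hi
    rw [Finset.filter_insert]
    by_cases h : i < x
    · rw [if_pos h, if_pos h, Finset.sum_insert (by simp [hx]), add_comm]
    · rw [if_neg h, if_neg h, add_zero]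
  rw [Finset.sum_congr rfl h2, Finset.sum_add_distrib, h1]
  have h3 : (∑ i ∈ E, if i < x then f i x else 0) = ∑ i ∈ E.filter (fun i => i < x), f i x :=
    (Finset.sum_filter _ _).symm
  have h4 : (∑ k ∈ E, f x k) = (∑ j ∈ E.filter (fun j => x < j), f x j)
      + ∑ i ∈ E.filter (fun i => i < x), f i x := by
    rw [← Finset.sum_filter_add_sum_filter_not E (fun j => x < j) (fun k => f x k)]
    congr 1
    refine Finset.sum_congr ?_ (fun i hi => hf x i)
    ext k; simp only [Finset.mem_filter, not_lt]
    constructor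
    · rintro ⟨hk, hnx⟩
      exact ⟨hk, lt_of_le_of_ne hnx (fun h => hx (h ▸ hk))⟩
    · rintro ⟨hk, hlt⟩; exact ⟨hk, hlt.le⟩
  rw [h3, h4]; ring

lemma swap_le (n : ℕ)
    (r V1 : ℕ → ℝ) (V2 : ℕ → ℕ → ℝ) (v0 : ℝ) (hv0 : 0 < v0)
    (hr : ∀ i ∈ Finset.Icc 1 n, 0 < r i)
    (hV1 : ∀ i ∈ Finset.Icc 1 n, 0 < V1 i)
    (hV2nn : ∀ i j, 0 ≤ V2 i j)
    (hV2symm : ∀ i j, V2 i j = V2 j i)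
    (hva1 : ∀ i j, 1 ≤ i → i < j → j ≤ n → V1 i ≤ V1 j)
    (hva2 : ∀ i j k, 1 ≤ i → i < j → j ≤ n → k ∈ Finset.Icc 1 n → k ≠ i → k ≠ j →
      V2 i k ≤ V2 j k)
    (hvb1 : ∀ i j, 1 ≤ i → i < j → j ≤ n → r j * V1 j ≤ r i * V1 i)
    (hvb2 : ∀ i j k, 1 ≤ i → i < j → j ≤ n → k ∈ Finset.Icc 1 n → k ≠ i → k ≠ j →
      (r j + r k) * V2 j k ≤ (r i + r k) * V2 i k)
    (R2 : Finset ℕ → ℝ)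
    (hR2 : ∀ C, R2 C =
      ((∑ i ∈ C, V1 i * r i) + ∑ i ∈ C, ∑ j ∈ C.filter (fun j => i < j), V2 i j * (r i + r j)) /
      (v0 + (∑ i ∈ C, V1 i) + ∑ i ∈ C, ∑ j ∈ C.filter (fun j => i < j), V2 i j))
    (Cs : Finset ℕ) (hCs : Cs ⊆ Finset.Icc 1 n)
    (m l : ℕ) (hm : 1 ≤ m) (hml : m < l) (hln : l ≤ n) (hmC : m ∉ Cs) (hlC : l ∈ Cs) :
    R2 Cs ≤ R2 (insert m (Cs.erase l)) := by
  set E := Cs.erase l with hE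
  have hlE : l ∉ E := Finset.notMem_erase _ _
  have hmE : m ∉ E := fun h => hmC (Finset.erase_subset _ _ h)
  have hCseq : Cs = insert l E := (Finset.insert_erase hlC).symm
  have hEsub : E ⊆ Finset.Icc 1 n := (Finset.erase_subset _ _).trans hCs
  have hmIcc : m ∈ Finset.Icc 1 n := Finset.mem_Icc.mpr ⟨hm, le_trans (le_of_lt hml) hln⟩
  have hlIcc : l ∈ Finset.Icc 1 n := hCs hlC
  have hf : ∀ a b, V2 a b * (r a + r b) = V2 b a * (r b + r a) := by
    intro a b; rw [hV2symm a b, add_comm (r a)]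
  have hg : ∀ a b, V2 a b = V2 b a := hV2symm
  set a := (∑ i ∈ E, V1 i * r i) +
    ∑ i ∈ E, ∑ j ∈ E.filter (fun j => i < j), V2 i j * (r i + r j) with ha
  set c := (∑ i ∈ E, V1 i) + ∑ i ∈ E, ∑ j ∈ E.filter (fun j => i < j), V2 i j with hc
  have key : ∀ x, x ∉ E → R2 (insert x E) =
      (a + (V1 x * r x + ∑ k ∈ E, V2 x k * (r x + r k))) /
      (v0 + c + (V1 x + ∑ k ∈ E, V2 x k)) := by
    intro x hx
    rw [hR2, sum_pairs_insert _ hf E x hx, sum_pairs_insert _ hg E x hx,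
      Finset.sum_insert hx, Finset.sum_insert hx]
    rw [ha, hc]
    ring_nf
  have hann : 0 ≤ a := by
    apply add_nonneg
    · exact Finset.sum_nonneg fun i hi => mul_nonneg (hV1 i (hEsub hi)).le (hr i (hEsub hi)).le
    · refine Finset.sum_nonneg fun i hi => Finset.sum_nonneg fun j hj => ?_
      have hj' := (Finset.mem_filter.mp hj).1
      exact mul_nonneg (hV2nn i j)
        (add_nonneg (hr i (hEsub hi)).le (hr j (hEsub hj')).le)
  have hcnn : 0 ≤ c := by
    apply add_nonneg
    · exact Finset.sum_nonneg fun i hi => (hV1 i (hEsub hi)).le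
    · exact Finset.sum_nonneg fun i _ => Finset.sum_nonneg fun j _ => hV2nn i j
  have hkE : ∀ k ∈ E, k ∈ Finset.Icc 1 n ∧ k ≠ m ∧ k ≠ l := by
    intro k hk
    exact ⟨hEsub hk, fun h => hmE (h ▸ hk), fun h => hlE (h ▸ hk)⟩
  have hb : V1 l * r l + ∑ k ∈ E, V2 l k * (r l + r k)
      ≤ V1 m * r m + ∑ k ∈ E, V2 m k * (r m + r k) := by
    refine add_le_add ?_ (Finset.sum_le_sum fun k hk => ?_)
    · have := hvb1 m l hm hml hln; linarith [this]
    · obtain ⟨hkI, hkm, hkl⟩ := hkE k hk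
      have := hvb2 m l k hm hml hln hkI hkm hkl
      nlinarith [this]
  have hdd : V1 m + ∑ k ∈ E, V2 m k ≤ V1 l + ∑ k ∈ E, V2 l k := by
    refine add_le_add (hva1 m l hm hml hln) (Finset.sum_le_sum fun k hk => ?_)
    obtain ⟨hkI, hkm, hkl⟩ := hkE k hk
    exact hva2 m l k hm hml hln hkI hkm hkl
  have hdmnn : 0 ≤ V1 m + ∑ k ∈ E, V2 m k :=
    add_nonneg (hV1 m hmIcc).le (Finset.sum_nonneg fun k _ => hV2nn m k)
  have hbmnn : 0 ≤ V1 m * r m + ∑ k ∈ E, V2 m k * (r m + r k) := by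
    refine add_nonneg (mul_nonneg (hV1 m hmIcc).le (hr m hmIcc).le)
      (Finset.sum_nonneg fun k hk => mul_nonneg (hV2nn m k)
        (add_nonneg (hr m hmIcc).le (hr k ((hkE k hk).1)).le))
  rw [hCseq, key l hlE, key m hmE]
  apply div_le_div₀ (by linarith) (by linarith) (by linarith) (by linarith)


/-- For value-conscious customers, a revenue-ordered set is optimal for the
cardinality-constrained BundleMVL-2 problem; moreover swapping any product of an optimal set
for a cheaper-indexed (higher-revenue) product outside it preserves the optimal revenue. -/
theorem value_conscious_revenue_ordered_optimal (n d : ℕ) (hd : 0 < d)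
    (r V1 : ℕ → ℝ) (V2 : ℕ → ℕ → ℝ) (v0 : ℝ) (hv0 : 0 < v0)
    (hr : ∀ i ∈ Finset.Icc 1 n, 0 < r i)
    (hsort : ∀ i j, 1 ≤ i → i ≤ j → j ≤ n → r j ≤ r i)
    (hV1 : ∀ i ∈ Finset.Icc 1 n, 0 < V1 i)
    (hV2nn : ∀ i j, 0 ≤ V2 i j)
    (hV2symm : ∀ i j, V2 i j = V2 j i)
    (hva1 : ∀ i j, 1 ≤ i → i < j → j ≤ n → V1 i ≤ V1 j)
    (hva2 : ∀ i j k, 1 ≤ i → i < j → j ≤ n → k ∈ Finset.Icc 1 n → k ≠ i → k ≠ j →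
      V2 i k ≤ V2 j k)
    (hvb1 : ∀ i j, 1 ≤ i → i < j → j ≤ n → r j * V1 j ≤ r i * V1 i)
    (hvb2 : ∀ i j k, 1 ≤ i → i < j → j ≤ n → k ∈ Finset.Icc 1 n → k ≠ i → k ≠ j →
      (r j + r k) * V2 j k ≤ (r i + r k) * V2 i k)
    (R2 : Finset ℕ → ℝ)
    (hR2 : ∀ C, R2 C =
      ((∑ i ∈ C, V1 i * r i) + ∑ i ∈ C, ∑ j ∈ C.filter (fun j => i < j), V2 i j * (r i + r j)) /
      (v0 + (∑ i ∈ C, V1 i) + ∑ i ∈ C, ∑ j ∈ C.filter (fun j => i < j), V2 i j)) :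
    (∃ m, m ≤ d ∧ m ≤ n ∧
      ∀ C ⊆ Finset.Icc 1 n, C.card ≤ d → R2 C ≤ R2 (Finset.Icc 1 m)) ∧
    (∀ Cs ⊆ Finset.Icc 1 n, Cs.card ≤ d →
      (∀ C ⊆ Finset.Icc 1 n, C.card ≤ d → R2 C ≤ R2 Cs) →
      ∀ m l, 1 ≤ m → m < l → l ≤ n → m ∉ Cs → l ∈ Cs →
        R2 (insert m (Cs.erase l)) = R2 Cs) := by
  have swap := swap_le n r V1 V2 v0 hv0 hr hV1 hV2nn hV2symm hva1 hva2 hvb1 hvb2 R2 hR2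
  have cardtilde : ∀ (Cs : Finset ℕ) (m l : ℕ), m ∉ Cs → l ∈ Cs →
      (insert m (Cs.erase l)).card = Cs.card := by
    intro Cs m l hmC hlC
    have hmE : m ∉ Cs.erase l := fun h => hmC (Finset.erase_subset _ _ h)
    have h1 : 1 ≤ Cs.card := Finset.card_pos.mpr ⟨l, hlC⟩
    rw [Finset.card_insert_of_notMem hmE, Finset.card_erase_of_mem hlC]
    omega
  have subtilde : ∀ (Cs : Finset ℕ) (m l : ℕ), Cs ⊆ Finset.Icc 1 n → 1 ≤ m → m < l → l ≤ n →
      insert m (Cs.erase l) ⊆ Finset.Icc 1 n := by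
    intro Cs m l hCs hm hml hln
    exact Finset.insert_subset (Finset.mem_Icc.mpr ⟨hm, le_trans hml.le hln⟩)
      ((Finset.erase_subset _ _).trans hCs)
  constructor
  · -- existence of revenue-ordered optimum
    set F := (Finset.Icc 1 n).powerset.filter (fun C => C.card ≤ d) with hF
    have hmemF : ∀ C : Finset ℕ, C ∈ F ↔ C ⊆ Finset.Icc 1 n ∧ C.card ≤ d := by
      intro C; simp [hF, Finset.mem_powerset]
    have hFne : F.Nonempty := ⟨∅, (hmemF ∅).mpr ⟨Finset.empty_subset _, by simp⟩⟩
    obtain ⟨C0, hC0F, hC0max⟩ := F.exists_max_image R2 hFne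
    set G := F.filter (fun C => ∀ C' ∈ F, R2 C' ≤ R2 C) with hG
    have hGne : G.Nonempty := ⟨C0, Finset.mem_filter.mpr ⟨hC0F, hC0max⟩⟩
    obtain ⟨Cs, hCsG, hCsmin⟩ := G.exists_min_image (fun C => ∑ i ∈ C, i) hGne
    obtain ⟨hCsF, hCsopt⟩ := Finset.mem_filter.mp hCsG
    obtain ⟨hCssub, hCscard⟩ := (hmemF Cs).mp hCsF
    have hcardIcc : (Finset.Icc 1 Cs.card).card = Cs.card := by
      rw [Nat.card_Icc]; omega
    have hclaim : Cs = Finset.Icc 1 Cs.card := by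
      by_contra hne
      have hnsub : ¬ Cs ⊆ Finset.Icc 1 Cs.card := fun h =>
        hne (Finset.eq_of_subset_of_card_le h (by omega))
      have hnsup : ¬ Finset.Icc 1 Cs.card ⊆ Cs := fun h =>
        hne (Finset.eq_of_subset_of_card_le h (by omega)).symm
      obtain ⟨l, hlC, hlnot⟩ := Finset.not_subset.mp hnsub
      obtain ⟨m, hmI, hmnot⟩ := Finset.not_subset.mp hnsup
      have hlIcc := Finset.mem_Icc.mp (hCssub hlC)
      have hmIcc' := Finset.mem_Icc.mp hmI
      have hml : m < l := by
        have := Finset.mem_Icc.not.mp hlnot; omega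
      have hm1 : 1 ≤ m := hmIcc'.1
      have hln : l ≤ n := hlIcc.2
      set Ct := insert m (Cs.erase l) with hCt
      have hCtF : Ct ∈ F := (hmemF Ct).mpr
        ⟨subtilde Cs m l hCssub hm1 hml hln, by rw [cardtilde Cs m l hmnot hlC]; exact hCscard⟩
      have hle : R2 Cs ≤ R2 Ct := swap Cs hCssub m l hm1 hml hln hmnot hlC
      have hCtG : Ct ∈ G := Finset.mem_filter.mpr
        ⟨hCtF, fun C' hC' => le_trans (hCsopt C' hC') hle⟩
      have hsum := hCsmin Ct hCtG
      have hsumerase : (∑ i ∈ Cs.erase l, i) + l = ∑ i ∈ Cs, i :=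
        Finset.sum_erase_add Cs _ hlC
      have hmE : m ∉ Cs.erase l := fun h => hmnot (Finset.erase_subset _ _ h)
      have hsumCt : (∑ i ∈ Ct, i) = m + ∑ i ∈ Cs.erase l, i := Finset.sum_insert hmE
      omega
    refine ⟨Cs.card, hCscard, ?_, ?_⟩
    · have := Finset.card_le_card hCssub
      rw [Nat.card_Icc] at this; omega
    · intro C hC hcard
      rw [← hclaim]
      exact hCsopt C ((hmemF C).mpr ⟨hC, hcard⟩)
  · -- swap preserves optimality
    intro Cs hsub hcard hopt m l hm hml hln hmC hlC
    refine le_antisymm ?_ (swap Cs hsub m l hm hml hln hmC hlC)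
    exact hopt _ (subtilde Cs m l hsub hm hml hln)
      (by rw [cardtilde Cs m l hmC hlC]; exact hcard)
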